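/- (Dai–Yuan global convergence) Assume Assumptions A1 and A2 hold for x⁰, and let 0 ≤ η < (1−σ)/(1+σ). Consider the conjugate gradient iteration with β_k := η·β_k^{DY}, where β_k^{DY} := −ψ_{x^k}(v(x^k)) / (ψ_{x^k}(d^{k−1}) − ψ_{x^{k−1}}(d^{k−1})) for k ≥ 1. If each t_k satisfies the strong Wolfe conditions at x^k along d^k, then liminf_{k→∞} ‖v(x^k)‖ = 0. -/

import Mathlib

open scoped BigOperators

noncomputable def pd (n : ℕ) (F : EuclideanSpace ℝ (Fin n) → ℝ)
    (x : EuclideanSpace ℝ (Fin n)) (j : Fin n) : ℝ :=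
  fderiv ℝ F x (EuclideanSpace.single j (1 : ℝ))

noncomputable def glo (n : ℕ) (F H : EuclideanSpace ℝ (Fin n) → ℝ)
    (x : EuclideanSpace ℝ (Fin n)) (j : Fin n) : ℝ :=
  min (pd n F x j) (pd n H x j)

noncomputable def ghi (n : ℕ) (F H : EuclideanSpace ℝ (Fin n) → ℝ)
    (x : EuclideanSpace ℝ (Fin n)) (j : Fin n) : ℝ :=
  max (pd n F x j) (pd n H x j)

noncomputable def gloVec (n : ℕ) (F H : EuclideanSpace ℝ (Fin n) → ℝ)
    (x : EuclideanSpace ℝ (Fin n)) : EuclideanSpace ℝ (Fin n) :=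
  WithLp.toLp 2 (fun j => glo n F H x j)

noncomputable def ghiVec (n : ℕ) (F H : EuclideanSpace ℝ (Fin n) → ℝ)
    (x : EuclideanSpace ℝ (Fin n)) : EuclideanSpace ℝ (Fin n) :=
  WithLp.toLp 2 (fun j => ghi n F H x j)

noncomputable def psi (m n : ℕ) (Gl Gu : Fin m → EuclideanSpace ℝ (Fin n) → ℝ)
    (x v : EuclideanSpace ℝ (Fin n)) : ℝ :=
  ⨆ i : Fin m, (1 / 2 : ℝ) *
    ((∑ j : Fin n, (glo n (Gl i) (Gu i) x j + ghi n (Gl i) (Gu i) x j) * v j) +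
     (∑ j : Fin n, (ghi n (Gl i) (Gu i) x j - glo n (Gl i) (Gu i) x j) * |v j|))

noncomputable def phi (m n : ℕ) (Gl Gu : Fin m → EuclideanSpace ℝ (Fin n) → ℝ)
    (i : Fin m) (x v : EuclideanSpace ℝ (Fin n)) : ℝ :=
  (1 / 2 : ℝ) *
    ((∑ j : Fin n, (glo n (Gl i) (Gu i) x j + ghi n (Gl i) (Gu i) x j) * v j) +
     (∑ j : Fin n, (ghi n (Gl i) (Gu i) x j - glo n (Gl i) (Gu i) x j) * |v j|))

lemma psi_eq (m n : ℕ) (Gl Gu : Fin m → EuclideanSpace ℝ (Fin n) → ℝ)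
    (x v : EuclideanSpace ℝ (Fin n)) :
    psi m n Gl Gu x v = ⨆ i, phi m n Gl Gu i x v := rfl

variable {m n : ℕ} {Gl Gu : Fin m → EuclideanSpace ℝ (Fin n) → ℝ}

lemma phi_le_psi (i : Fin m) (x v : EuclideanSpace ℝ (Fin n)) :
    phi m n Gl Gu i x v ≤ psi m n Gl Gu x v := by
  rw [psi_eq]
  exact le_ciSup (f := fun i => phi m n Gl Gu i x v) (Set.Finite.bddAbove (Set.finite_range _)) i

lemma psi_le (hm : 0 < m) {a : ℝ} {x v : EuclideanSpace ℝ (Fin n)}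
    (h : ∀ i, phi m n Gl Gu i x v ≤ a) : psi m n Gl Gu x v ≤ a := by
  haveI : Nonempty (Fin m) := ⟨⟨0, hm⟩⟩
  exact ciSup_le h

lemma psi_zero (hm : 0 < m) (x : EuclideanSpace ℝ (Fin n)) :
    psi m n Gl Gu x 0 = 0 := by
  haveI : Nonempty (Fin m) := ⟨⟨0, hm⟩⟩
  have : ∀ i, phi m n Gl Gu i x 0 = 0 := by
    intro i
    simp [phi]
  rw [psi_eq]
  simp only [this, ciSup_const]

lemma phi_smul (i : Fin m) (x v : EuclideanSpace ℝ (Fin n)) {a : ℝ} (ha : 0 ≤ a) :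
    phi m n Gl Gu i x (a • v) = a * phi m n Gl Gu i x v := by
  simp only [phi, PiLp.smul_apply, smul_eq_mul, abs_mul, abs_of_nonneg ha]
  have e1 : ∑ j : Fin n, (glo n (Gl i) (Gu i) x j + ghi n (Gl i) (Gu i) x j) * (a * v j)
      = a * ∑ j : Fin n, (glo n (Gl i) (Gu i) x j + ghi n (Gl i) (Gu i) x j) * v j := by
    rw [Finset.mul_sum]; exact Finset.sum_congr rfl (by intros; ring)
  have e2 : ∑ j : Fin n, (ghi n (Gl i) (Gu i) x j - glo n (Gl i) (Gu i) x j) * (a * |v j|)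
      = a * ∑ j : Fin n, (ghi n (Gl i) (Gu i) x j - glo n (Gl i) (Gu i) x j) * |v j| := by
    rw [Finset.mul_sum]; exact Finset.sum_congr rfl (by intros; ring)
  rw [e1, e2]; ring

lemma psi_smul (hm : 0 < m) (x v : EuclideanSpace ℝ (Fin n)) {a : ℝ} (ha : 0 ≤ a) :
    psi m n Gl Gu x (a • v) = a * psi m n Gl Gu x v := by
  haveI : Nonempty (Fin m) := ⟨⟨0, hm⟩⟩
  rw [psi_eq, psi_eq, Real.mul_iSup_of_nonneg ha]
  exact iSup_congr fun i => phi_smul i x v ha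

lemma psi_add_le (hm : 0 < m) (x u w : EuclideanSpace ℝ (Fin n)) :
    psi m n Gl Gu x (u + w) ≤ psi m n Gl Gu x u + psi m n Gl Gu x w := by
  apply psi_le hm
  intro i
  have h1 : phi m n Gl Gu i x (u + w) ≤ phi m n Gl Gu i x u + phi m n Gl Gu i x w := by
    simp only [phi, PiLp.add_apply]
    have habs : ∀ j : Fin n,
        (ghi n (Gl i) (Gu i) x j - glo n (Gl i) (Gu i) x j) * |u j + w j| ≤
        (ghi n (Gl i) (Gu i) x j - glo n (Gl i) (Gu i) x j) * (|u j| + |w j|) := by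
      intro j
      apply mul_le_mul_of_nonneg_left (abs_add_le _ _)
      simp [ghi, glo, sub_nonneg, min_le_max]
    calc (1/2 : ℝ) * ((∑ j : Fin n, (glo n (Gl i) (Gu i) x j + ghi n (Gl i) (Gu i) x j) * (u j + w j)) +
          (∑ j : Fin n, (ghi n (Gl i) (Gu i) x j - glo n (Gl i) (Gu i) x j) * |u j + w j|))
        ≤ (1/2 : ℝ) * ((∑ j : Fin n, (glo n (Gl i) (Gu i) x j + ghi n (Gl i) (Gu i) x j) * (u j + w j)) +
          (∑ j : Fin n, (ghi n (Gl i) (Gu i) x j - glo n (Gl i) (Gu i) x j) * (|u j| + |w j|))) := by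
          apply mul_le_mul_of_nonneg_left _ (by norm_num)
          exact add_le_add_right (Finset.sum_le_sum fun j _ => habs j) _
      _ = _ := by
          simp only [mul_add, add_mul, Finset.sum_add_distrib]
          ring
  exact h1.trans (add_le_add (phi_le_psi i x u) (phi_le_psi i x w))

lemma psi_min (hm : 0 < m) (y v : EuclideanSpace ℝ (Fin n))
    (hv : ∀ w, psi m n Gl Gu y v + (1/2) * ‖v‖^2 ≤ psi m n Gl Gu y w + (1/2) * ‖w‖^2) :
    psi m n Gl Gu y v = -‖v‖^2 := by
  by_cases hv0 : v = 0
  · subst hv0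
    simp [psi_zero hm]
  · set P := psi m n Gl Gu y v with hP
    set N := ‖v‖^2 with hN
    have hN0 : 0 < N := hN ▸ pow_pos (norm_pos_iff.mpr hv0) 2
    have hq : ∀ a : ℝ, 0 ≤ a → P + N/2 ≤ a * P + a^2 * N/2 := by
      intro a ha
      have h := hv (a • v)
      rw [psi_smul hm _ _ ha, norm_smul, Real.norm_eq_abs, ← hP] at h
      have h2 : (|a| * ‖v‖)^2 = a^2 * N := by
        rw [mul_pow, sq_abs, hN]
      rw [h2] at h
      linarith
    have hA : P + N = 0 := by
      rcases lt_trichotomy (P + N) 0 with hlt | heq | hgt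
      · exfalso
        set δ := min 1 (-(P+N)/N) with hδ
        have hδ0 : 0 < δ := lt_min one_pos (div_pos (by linarith) hN0)
        have hδ1 : δ ≤ 1 := min_le_left _ _
        have hδ2 : δ * N ≤ -(P+N) := by
          have := min_le_right 1 (-(P+N)/N)
          calc δ * N ≤ (-(P+N)/N) * N := by nlinarith
            _ = -(P+N) := by field_simp
        have h := hq (1+δ) (by linarith)
        nlinarith
      · linarith
      · exfalso
        set δ := min 1 ((P+N)/N) with hδ
        have hδ0 : 0 < δ := lt_min one_pos (div_pos (by linarith) hN0)
        have hδ1 : δ ≤ 1 := min_le_left _ _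
        have hδ2 : δ * N ≤ (P+N) := by
          have := min_le_right 1 ((P+N)/N)
          calc δ * N ≤ ((P+N)/N) * N := by nlinarith
            _ = (P+N) := by field_simp
        have h := hq (1-δ) (by linarith)
        nlinarith
    linarith

lemma sum_mul_le_norm (a b : EuclideanSpace ℝ (Fin n)) :
    ∑ j : Fin n, a j * b j ≤ ‖a‖ * ‖b‖ := by
  have h := real_inner_le_norm a b
  rw [PiLp.inner_apply] at h
  simpa [RCLike.inner_apply, conj_trivial, mul_comm] using h

noncomputable def absVec (n : ℕ) (d : EuclideanSpace ℝ (Fin n)) : EuclideanSpace ℝ (Fin n) :=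
  WithLp.toLp 2 (fun j => |d j|)

lemma norm_absVec (d : EuclideanSpace ℝ (Fin n)) :
    ‖absVec n d‖ = ‖d‖ := by
  rw [EuclideanSpace.norm_eq, EuclideanSpace.norm_eq]
  congr 1
  apply Finset.sum_congr rfl
  intro j _
  simp [absVec, Real.norm_eq_abs, abs_abs]

lemma psi_lip (hm : 0 < m) {L : ℝ} (p q d : EuclideanSpace ℝ (Fin n))
    (hL : ∀ i : Fin m,
      ‖gloVec n (Gl i) (Gu i) p - gloVec n (Gl i) (Gu i) q‖ ≤ L * ‖p - q‖ ∧
      ‖ghiVec n (Gl i) (Gu i) p - ghiVec n (Gl i) (Gu i) q‖ ≤ L * ‖p - q‖) :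
    psi m n Gl Gu p d ≤ psi m n Gl Gu q d + 2 * L * ‖p - q‖ * ‖d‖ := by
  apply psi_le hm
  intro i
  set u1 : EuclideanSpace ℝ (Fin n) :=
    (gloVec n (Gl i) (Gu i) p - gloVec n (Gl i) (Gu i) q) +
    (ghiVec n (Gl i) (Gu i) p - ghiVec n (Gl i) (Gu i) q) with hu1
  set u2 : EuclideanSpace ℝ (Fin n) :=
    (ghiVec n (Gl i) (Gu i) p - ghiVec n (Gl i) (Gu i) q) -
    (gloVec n (Gl i) (Gu i) p - gloVec n (Gl i) (Gu i) q) with hu2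
  have hu1n : ‖u1‖ ≤ 2 * L * ‖p - q‖ := by
    calc ‖u1‖ ≤ ‖gloVec n (Gl i) (Gu i) p - gloVec n (Gl i) (Gu i) q‖ +
        ‖ghiVec n (Gl i) (Gu i) p - ghiVec n (Gl i) (Gu i) q‖ := norm_add_le _ _
      _ ≤ 2 * L * ‖p - q‖ := by have := hL i; linarith [this.1, this.2]
  have hu2n : ‖u2‖ ≤ 2 * L * ‖p - q‖ := by
    calc ‖u2‖ ≤ ‖ghiVec n (Gl i) (Gu i) p - ghiVec n (Gl i) (Gu i) q‖ +
        ‖gloVec n (Gl i) (Gu i) p - gloVec n (Gl i) (Gu i) q‖ := norm_sub_le _ _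
      _ ≤ 2 * L * ‖p - q‖ := by have := hL i; linarith [this.1, this.2]
  set ad : EuclideanSpace ℝ (Fin n) := absVec n d with had
  have hadn : ‖ad‖ = ‖d‖ := norm_absVec d
  have hA : ∑ j : Fin n, (glo n (Gl i) (Gu i) p j + ghi n (Gl i) (Gu i) p j) * d j ≤
      (∑ j : Fin n, (glo n (Gl i) (Gu i) q j + ghi n (Gl i) (Gu i) q j) * d j) + ‖u1‖ * ‖d‖ := by
    have h1 := sum_mul_le_norm u1 d
    have e : ∑ j : Fin n, u1 j * d j =
        (∑ j : Fin n, (glo n (Gl i) (Gu i) p j + ghi n (Gl i) (Gu i) p j) * d j) -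
        ∑ j : Fin n, (glo n (Gl i) (Gu i) q j + ghi n (Gl i) (Gu i) q j) * d j := by
      rw [← Finset.sum_sub_distrib]
      apply Finset.sum_congr rfl
      intro j _
      simp only [hu1, PiLp.add_apply, PiLp.sub_apply, gloVec, ghiVec, PiLp.toLp_apply]
      ring
    linarith [e ▸ h1]
  have hB : ∑ j : Fin n, (ghi n (Gl i) (Gu i) p j - glo n (Gl i) (Gu i) p j) * |d j| ≤
      (∑ j : Fin n, (ghi n (Gl i) (Gu i) q j - glo n (Gl i) (Gu i) q j) * |d j|) + ‖u2‖ * ‖d‖ := by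
    have h1 := sum_mul_le_norm u2 ad
    have e : ∑ j : Fin n, u2 j * ad j =
        (∑ j : Fin n, (ghi n (Gl i) (Gu i) p j - glo n (Gl i) (Gu i) p j) * |d j|) -
        ∑ j : Fin n, (ghi n (Gl i) (Gu i) q j - glo n (Gl i) (Gu i) q j) * |d j| := by
      rw [← Finset.sum_sub_distrib]
      apply Finset.sum_congr rfl
      intro j _
      simp only [hu2, PiLp.add_apply, PiLp.sub_apply, gloVec, ghiVec, had, absVec, PiLp.toLp_apply]
      ring
    rw [e, hadn] at h1
    linarith
  have hphi : phi m n Gl Gu i p d ≤ phi m n Gl Gu i q d + 2 * L * ‖p - q‖ * ‖d‖ := by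
    simp only [phi]
    have hd0 : (0:ℝ) ≤ ‖d‖ := norm_nonneg d
    nlinarith [hA, hB, mul_le_mul_of_nonneg_right hu1n hd0, mul_le_mul_of_nonneg_right hu2n hd0]
  exact hphi.trans (add_le_add_left (phi_le_psi i q d) _)

lemma ratio_bound {σ η ν' τ s b : ℝ} (hσ0 : 0 < σ) (h1σ : 0 < 1 - σ) (hη0 : 0 ≤ η)
    (hν'0 : 0 < ν') (hτ0 : 0 < τ) (hs1 : s ≤ σ * τ) (hΔ0 : 0 < s + τ)
    (hb : b = η * (ν' / (s + τ))) : b * s ≤ η * σ / (1 - σ) * ν' := by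
  rcases le_or_gt s 0 with hsneg | hspos
  · have hb0 : 0 ≤ b := by rw [hb]; positivity
    have h1 : b * s ≤ 0 := mul_nonpos_of_nonneg_of_nonpos hb0 hsneg
    have h2 : 0 ≤ η * σ / (1 - σ) * ν' := by positivity
    linarith
  · rw [hb]
    have hscal : (1 - σ) * s ≤ σ * (s + τ) := by nlinarith
    have goal2 : ν' * s / (s + τ) ≤ σ / (1 - σ) * ν' := by
      rw [div_le_iff₀ hΔ0]
      have hmul := mul_le_mul_of_nonneg_left hscal hν'0.le
      have hrw : σ / (1 - σ) * ν' * (s + τ) = (ν' * (σ * (s + τ))) / (1 - σ) := by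
        field_simp
      rw [hrw, le_div_iff₀ h1σ]
      nlinarith [hmul]
    calc η * (ν' / (s + τ)) * s = η * (ν' * s / (s + τ)) := by ring
      _ ≤ η * (σ / (1 - σ) * ν') := mul_le_mul_of_nonneg_left goal2 hη0
      _ = η * σ / (1 - σ) * ν' := by ring

lemma tstep_bound {σ c ν τ Dk L tk M : ℝ} (h1σ : 0 < 1 - σ) (hc0 : 0 < c) (hν : 0 < ν)
    (hL : 0 < L) (htk : 0 < tk) (hM : 0 < M)
    (F1 : c * ν ≤ τ) (F2 : Dk ≤ M * ν) (hDk : 0 ≤ Dk)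
    (F3 : (1 - σ) * τ ≤ 2 * L * tk * Dk ^ 2) :
    (1 - σ) * c ^ 2 / (2 * L * M ^ 2) ≤ tk * τ := by
  have hτ0 : 0 < τ := lt_of_lt_of_le (by positivity) F1
  rw [div_le_iff₀ (by positivity)]
  have h1 : (1 - σ) * τ * (c * ν) ≤ 2 * L * tk * Dk ^ 2 * (c * ν) :=
    mul_le_mul_of_nonneg_right F3 (by positivity)
  have h2 : (1 - σ) * (c * ν) * (c * ν) ≤ (1 - σ) * τ * (c * ν) :=
    mul_le_mul_of_nonneg_right (mul_le_mul_of_nonneg_left F1 h1σ.le) (by positivity)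
  have h3 : 2 * L * tk * Dk ^ 2 * (c * ν) ≤ 2 * L * tk * Dk ^ 2 * τ :=
    mul_le_mul_of_nonneg_left F1 (by positivity)
  have h4 : Dk ^ 2 ≤ M ^ 2 * ν ^ 2 := by nlinarith
  have h5 : Dk ^ 2 * (2 * L * tk * τ) ≤ M ^ 2 * ν ^ 2 * (2 * L * tk * τ) :=
    mul_le_mul_of_nonneg_right h4 (by positivity)
  have hfin : (1 - σ) * c ^ 2 * ν ^ 2 ≤ tk * τ * (2 * L * M ^ 2) * ν ^ 2 := by nlinarith
  exact le_of_mul_le_mul_right hfin (by positivity : (0:ℝ) < ν ^ 2)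

def LevelSet (m n : ℕ) (Gl Gu : Fin m → EuclideanSpace ℝ (Fin n) → ℝ)
    (x0 : EuclideanSpace ℝ (Fin n)) : Set (EuclideanSpace ℝ (Fin n)) :=
  {x | ∀ i : Fin m, Gl i x ≤ Gl i x0 ∧ Gu i x ≤ Gu i x0}

def StdWolfe (m n : ℕ) (Gl Gu : Fin m → EuclideanSpace ℝ (Fin n) → ℝ)
    (ρ σ : ℝ) (x d : EuclideanSpace ℝ (Fin n)) (t : ℝ) : Prop :=
  (∀ i : Fin m,
      Gl i (x + t • d) ≤ Gl i x + ρ * t * psi m n Gl Gu x d ∧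
      Gu i (x + t • d) ≤ Gu i x + ρ * t * psi m n Gl Gu x d) ∧
  σ * psi m n Gl Gu x d ≤ psi m n Gl Gu (x + t • d) d

def StrongWolfe (m n : ℕ) (Gl Gu : Fin m → EuclideanSpace ℝ (Fin n) → ℝ)
    (ρ σ : ℝ) (x d : EuclideanSpace ℝ (Fin n)) (t : ℝ) : Prop :=
  (∀ i : Fin m,
      Gl i (x + t • d) ≤ Gl i x + ρ * t * psi m n Gl Gu x d ∧
      Gu i (x + t • d) ≤ Gu i x + ρ * t * psi m n Gl Gu x d) ∧
  |psi m n Gl Gu (x + t • d) d| ≤ σ * |psi m n Gl Gu x d|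

def AssumptionA1 (m n : ℕ) (Gl Gu : Fin m → EuclideanSpace ℝ (Fin n) → ℝ)
    (x0 : EuclideanSpace ℝ (Fin n)) : Prop :=
  ∀ i : Fin m, ∃ L : ℝ, 0 < L ∧
    ∀ y ∈ LevelSet m n Gl Gu x0, ∀ z ∈ LevelSet m n Gl Gu x0,
      ‖gloVec n (Gl i) (Gu i) y - gloVec n (Gl i) (Gu i) z‖ ≤ L * ‖y - z‖ ∧
      ‖ghiVec n (Gl i) (Gu i) y - ghiVec n (Gl i) (Gu i) z‖ ≤ L * ‖y - z‖

def AssumptionA2 (m n : ℕ) (Gl Gu : Fin m → EuclideanSpace ℝ (Fin n) → ℝ)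
    (x0 : EuclideanSpace ℝ (Fin n)) : Prop :=
  ∀ y : ℕ → EuclideanSpace ℝ (Fin n),
    (∀ k, y k ∈ LevelSet m n Gl Gu x0) →
    (∀ (i : Fin m) (k : ℕ), Gl i (y (k+1)) ≤ Gl i (y k) ∧ Gu i (y (k+1)) ≤ Gu i (y k)) →
    ∀ i : Fin m, (∃ Cl : ℝ, ∀ k, Cl ≤ Gl i (y k)) ∧ (∃ Cu : ℝ, ∀ k, Cu ≤ Gu i (y k))

set_option maxHeartbeats 4000000 in
theorem dy_convergence (m n : ℕ) (hm : 0 < m) (hn : 0 < n)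
    (Gl Gu : Fin m → EuclideanSpace ℝ (Fin n) → ℝ)
    (hGl : ∀ i, ContDiff ℝ 1 (Gl i)) (hGu : ∀ i, ContDiff ℝ 1 (Gu i))
    (hle : ∀ (i : Fin m) (x : EuclideanSpace ℝ (Fin n)), Gl i x ≤ Gu i x)
    (vv : EuclideanSpace ℝ (Fin n) → EuclideanSpace ℝ (Fin n))
    (hvmin : ∀ y w : EuclideanSpace ℝ (Fin n),
      psi m n Gl Gu y (vv y) + (1/2) * ‖vv y‖^2 ≤ psi m n Gl Gu y w + (1/2) * ‖w‖^2)
    (ρ σ : ℝ) (hρ : 0 < ρ) (hρσ : ρ < σ) (hσ : σ < 1)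
    (x d : ℕ → EuclideanSpace ℝ (Fin n)) (t : ℕ → ℝ) (β : ℕ → ℝ)
    (hx : ∀ k : ℕ, x (k+1) = x k + t k • d k)
    (ht : ∀ k : ℕ, 0 < t k)
    (hd0 : d 0 = vv (x 0))
    (hdk : ∀ k : ℕ, d (k+1) = vv (x (k+1)) + β (k+1) • d k)
    (hvne : ∀ k : ℕ, vv (x k) ≠ 0)
    (η : ℝ) (hη0 : 0 ≤ η) (hη1 : η < (1 - σ) / (1 + σ))
    (hA1 : AssumptionA1 m n Gl Gu (x 0))
    (hA2 : AssumptionA2 m n Gl Gu (x 0))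
    (hβ : ∀ k : ℕ, β (k+1) =
      η * (-psi m n Gl Gu (x (k+1)) (vv (x (k+1))) /
        (psi m n Gl Gu (x (k+1)) (d k) - psi m n Gl Gu (x k) (d k))))
    (hw : ∀ k : ℕ, StrongWolfe m n Gl Gu ρ σ (x k) (d k) (t k)) :
    Filter.liminf (fun k : ℕ => ‖vv (x k)‖) Filter.atTop = 0 := by
  haveI : Nonempty (Fin m) := ⟨⟨0, hm⟩⟩
  have hσ0 : 0 < σ := lt_trans hρ hρσ
  have h1σ : 0 < 1 - σ := by linarith
  have h1σ' : 0 < 1 + σ := by linarith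
  have hηw : η * (1 + σ) < 1 - σ := by
    calc η * (1 + σ) < ((1 - σ) / (1 + σ)) * (1 + σ) := by
          exact mul_lt_mul_of_pos_right hη1 h1σ'
      _ = 1 - σ := by field_simp
  -- basic quantities
  have hpsiv : ∀ k, psi m n Gl Gu (x k) (vv (x k)) = -‖vv (x k)‖^2 :=
    fun k => psi_min hm _ _ (fun w => hvmin (x k) w)
  have hν : ∀ k, 0 < ‖vv (x k)‖^2 := fun k => pow_pos (norm_pos_iff.mpr (hvne k)) 2
  set c : ℝ := 1 - η * σ / (1 - σ) with hc
  clear_value c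
  have hc0 : 0 < c := by
    rw [hc]
    have h1 : η * σ < 1 - σ := by nlinarith
    have : η * σ / (1 - σ) < 1 := (div_lt_one h1σ).mpr h1
    linarith
  have hc1 : c ≤ 1 := by
    rw [hc]
    have : 0 ≤ η * σ / (1 - σ) := by positivity
    linarith
  -- curvature condition on strong Wolfe, rewritten
  have hW2 : ∀ k, |psi m n Gl Gu (x (k+1)) (d k)| ≤ σ * |psi m n Gl Gu (x k) (d k)| := by
    intro k; rw [hx k]; exact (hw k).2
  have hW1 : ∀ k i, Gl i (x (k+1)) ≤ Gl i (x k) + ρ * t k * psi m n Gl Gu (x k) (d k) ∧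
      Gu i (x (k+1)) ≤ Gu i (x k) + ρ * t k * psi m n Gl Gu (x k) (d k) := by
    intro k i; rw [hx k]; exact (hw k).1 i
  -- sufficient descent
  have hdes : ∀ k, psi m n Gl Gu (x k) (d k) ≤ -(c * ‖vv (x k)‖^2) := by
    intro k
    induction k with
    | zero =>
      rw [hd0, hpsiv 0]
      nlinarith [hν 0]
    | succ k ih =>
      set ν' : ℝ := ‖vv (x (k+1))‖^2 with hν'
      clear_value ν'
      have hν'0 : 0 < ν' := by rw [hν']; exact hν (k+1)
      set τ : ℝ := -(psi m n Gl Gu (x k) (d k)) with hτ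
      clear_value τ
      have hτ0 : 0 < τ := by
        rw [hτ]
        have := hν k
        nlinarith [ih, hc0]
      have hpsikneg : psi m n Gl Gu (x k) (d k) < 0 := by
        have h0 := hτ0
        rw [hτ] at h0
        linarith
      have habs : |psi m n Gl Gu (x k) (d k)| = τ := by
        rw [abs_of_neg hpsikneg, ← hτ]
      set s : ℝ := psi m n Gl Gu (x (k+1)) (d k) with hs
      clear_value s
      have hsabs : |s| ≤ σ * τ := by
        have h := hW2 k
        rw [habs] at h
        rw [hs]
        exact h
      have hs1 : s ≤ σ * τ := (abs_le.mp hsabs).2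
      have hs2 : -(σ * τ) ≤ s := (abs_le.mp hsabs).1
      have hΔ0 : 0 < s + τ := by nlinarith
      have hpsik : psi m n Gl Gu (x k) (d k) = -τ := by rw [hτ]; ring
      have hβval : β (k+1) = η * (ν' / (s + τ)) := by
        rw [hβ k, hpsiv (k+1), hpsik, ← hν', ← hs]
        ring
      have hβ0 : 0 ≤ β (k+1) := by
        rw [hβval]
        positivity
      have key : psi m n Gl Gu (x (k+1)) (d (k+1)) ≤ -ν' + β (k+1) * s := by
        rw [hdk k]
        calc psi m n Gl Gu (x (k+1)) (vv (x (k+1)) + β (k+1) • d k)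
            ≤ psi m n Gl Gu (x (k+1)) (vv (x (k+1))) +
              psi m n Gl Gu (x (k+1)) (β (k+1) • d k) := psi_add_le hm _ _ _
          _ = -ν' + β (k+1) * s := by
              rw [hpsiv (k+1), psi_smul hm _ _ hβ0, ← hs, ← hν']
      have hbound : β (k+1) * s ≤ η * σ / (1 - σ) * ν' :=
        ratio_bound hσ0 h1σ hη0 hν'0 hτ0 hs1 hΔ0 hβval
      have : -ν' + β (k+1) * s ≤ -(c * ν') := by
        have : -ν' + η * σ / (1 - σ) * ν' = -(c * ν') := by rw [hc]; ring
        linarith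
      linarith [key]
  have hdneg : ∀ k, psi m n Gl Gu (x k) (d k) < 0 := by
    intro k
    have := hν k
    nlinarith [hdes k]
  have hdne : ∀ k, d k ≠ 0 := by
    intro k h
    have := hdneg k
    rw [h, psi_zero hm] at this
    exact lt_irrefl 0 this
  have hdecl : ∀ k i, Gl i (x (k+1)) ≤ Gl i (x k) ∧ Gu i (x (k+1)) ≤ Gu i (x k) := by
    intro k i
    have h := hW1 k i
    have : ρ * t k * psi m n Gl Gu (x k) (d k) ≤ 0 := by
      apply mul_nonpos_of_nonneg_of_nonpos
      · exact mul_nonneg hρ.le (ht k).le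
      · exact (hdneg k).le
    exact ⟨h.1.trans (by linarith), h.2.trans (by linarith)⟩
  have hL0 : ∀ k, x k ∈ LevelSet m n Gl Gu (x 0) := by
    intro k
    induction k with
    | zero => intro i; exact ⟨le_refl _, le_refl _⟩
    | succ k ih =>
      intro i
      exact ⟨(hdecl k i).1.trans (ih i).1, (hdecl k i).2.trans (ih i).2⟩
  -- Lipschitz constant
  choose Lf hLf0 hLf using hA1
  set L : ℝ := ∑ i, Lf i with hLdef
  have hLpos : 0 < L := by
    rw [hLdef]
    exact Finset.sum_pos (fun i _ => hLf0 i) ⟨⟨0, hm⟩, Finset.mem_univ _⟩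
  have hLi : ∀ i, Lf i ≤ L := by
    intro i
    rw [hLdef]
    exact Finset.single_le_sum (fun j _ => (hLf0 j).le) (Finset.mem_univ i)
  clear_value L
  have hnormx : ∀ k, ‖x (k+1) - x k‖ = t k * ‖d k‖ := by
    intro k
    rw [hx k, add_sub_cancel_left, norm_smul, Real.norm_eq_abs, abs_of_pos (ht k)]
  have hlip : ∀ k, psi m n Gl Gu (x (k+1)) (d k) ≤
      psi m n Gl Gu (x k) (d k) + 2 * L * (t k * ‖d k‖) * ‖d k‖ := by
    intro k
    have hLb : ∀ i : Fin m,
        ‖gloVec n (Gl i) (Gu i) (x (k+1)) - gloVec n (Gl i) (Gu i) (x k)‖ ≤ L * ‖x (k+1) - x k‖ ∧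
        ‖ghiVec n (Gl i) (Gu i) (x (k+1)) - ghiVec n (Gl i) (Gu i) (x k)‖ ≤ L * ‖x (k+1) - x k‖ := by
      intro i
      have h := hLf i (x (k+1)) (hL0 (k+1)) (x k) (hL0 k)
      have hmono : Lf i * ‖x (k+1) - x k‖ ≤ L * ‖x (k+1) - x k‖ :=
        mul_le_mul_of_nonneg_right (hLi i) (norm_nonneg _)
      exact ⟨h.1.trans hmono, h.2.trans hmono⟩
    have h := psi_lip hm (x (k+1)) (x k) (d k) hLb
    rwa [hnormx k] at h
  have hstep : ∀ k, (1 - σ) * (-(psi m n Gl Gu (x k) (d k))) ≤ 2 * L * t k * ‖d k‖ ^ 2 := by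
    intro k
    have habs : |psi m n Gl Gu (x k) (d k)| = -(psi m n Gl Gu (x k) (d k)) := abs_of_neg (hdneg k)
    have h2 := hW2 k
    rw [habs] at h2
    have h3 := (abs_le.mp h2).1
    have h4 := hlip k
    have hsq : ‖d k‖ ^ 2 = ‖d k‖ * ‖d k‖ := sq (‖d k‖) ▸ rfl
    nlinarith [h3, h4]
  -- conclusion via liminf characterization
  rw [Filter.liminf_eq]
  by_contra hne
  have h0S : (0:ℝ) ∈ {a : ℝ | ∀ᶠ k in Filter.atTop, a ≤ ‖vv (x k)‖} := by
    simp only [Set.mem_setOf_eq]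
    exact Filter.Eventually.of_forall fun k => norm_nonneg _
  by_cases hbdd : BddAbove {a : ℝ | ∀ᶠ k in Filter.atTop, a ≤ ‖vv (x k)‖}
  swap
  · exact hne (Real.sSup_of_not_bddAbove hbdd)
  have hlim0 : 0 ≤ sSup {a : ℝ | ∀ᶠ k in Filter.atTop, a ≤ ‖vv (x k)‖} := le_csSup hbdd h0S
  have hpos : 0 < sSup {a : ℝ | ∀ᶠ k in Filter.atTop, a ≤ ‖vv (x k)‖} :=
    lt_of_le_of_ne hlim0 (Ne.symm hne)
  obtain ⟨ε, hεS, hεgt⟩ := exists_lt_of_lt_csSup ⟨0, h0S⟩ (half_lt_self hpos)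
  have hε0 : 0 < ε := lt_trans (half_pos hpos) hεgt
  obtain ⟨K, hK⟩ := Filter.eventually_atTop.mp hεS
  -- facts about the beta denominator
  have hfacts : ∀ k, 0 < psi m n Gl Gu (x (k+1)) (d k) - psi m n Gl Gu (x k) (d k) ∧
      (1 - σ) * (c * ‖vv (x k)‖^2) ≤
        psi m n Gl Gu (x (k+1)) (d k) - psi m n Gl Gu (x k) (d k) := by
    intro k
    have hp := hdes k
    have h2 := hW2 k
    rw [abs_of_neg (hdneg k)] at h2
    have h3 := (abs_le.mp h2).1
    have h5 : (1 - σ) * (c * ‖vv (x k)‖^2) ≤ (1 - σ) * (-(psi m n Gl Gu (x k) (d k))) :=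
      mul_le_mul_of_nonneg_left (by linarith) h1σ.le
    have h6 : 0 < (1 - σ) * (c * ‖vv (x k)‖^2) := by
      have := hν k
      positivity
    constructor <;> linarith
  have hβval : ∀ k, β (k+1) = η * (‖vv (x (k+1))‖^2 /
      (psi m n Gl Gu (x (k+1)) (d k) - psi m n Gl Gu (x k) (d k))) := by
    intro k
    rw [hβ k, hpsiv (k+1)]
    ring
  have hβpos : ∀ k, 0 ≤ β (k+1) := by
    intro k
    rw [hβval k]
    exact mul_nonneg hη0 (div_nonneg (hν (k+1)).le (hfacts k).1.le)
  set θ : ℝ := η / ((1 - σ) * c) with hθ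
  have hθ0 : 0 ≤ θ := by rw [hθ]; positivity
  have hcc : (1 - σ) * c = 1 - σ - η * σ := by rw [hc]; field_simp
  have hθ1 : θ < 1 := by
    rw [hθ, div_lt_one (by positivity), hcc]
    linarith [hηw]
  clear_value θ
  have hβub : ∀ k, β (k+1) ≤ θ * (‖vv (x (k+1))‖^2 / ‖vv (x k)‖^2) := by
    intro k
    rw [hβval k]
    obtain ⟨hΔpos, hΔge⟩ := hfacts k
    have h1 : ‖vv (x (k+1))‖^2 / (psi m n Gl Gu (x (k+1)) (d k) - psi m n Gl Gu (x k) (d k)) ≤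
        ‖vv (x (k+1))‖^2 / ((1 - σ) * (c * ‖vv (x k)‖^2)) := by
      have hden : 0 < (1 - σ) * (c * ‖vv (x k)‖^2) := mul_pos h1σ (mul_pos hc0 (hν k))
      gcongr <;> first
        | exact (hν (k+1)).le
        | exact hden
        | exact hΔge
    have h2 : η * (‖vv (x (k+1))‖^2 / ((1 - σ) * (c * ‖vv (x k)‖^2))) =
        θ * (‖vv (x (k+1))‖^2 / ‖vv (x k)‖^2) := by
      rw [hθ]
      simp only [div_eq_mul_inv, mul_inv]
      ring
    rw [← h2]
    exact mul_le_mul_of_nonneg_left h1 hη0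
  have hdnorm : ∀ k, ‖d (k+1)‖ ≤ ‖vv (x (k+1))‖ + β (k+1) * ‖d k‖ := by
    intro k
    rw [hdk k]
    calc ‖vv (x (k+1)) + β (k+1) • d k‖
        ≤ ‖vv (x (k+1))‖ + ‖β (k+1) • d k‖ := norm_add_le _ _
      _ = ‖vv (x (k+1))‖ + β (k+1) * ‖d k‖ := by
          rw [norm_smul, Real.norm_eq_abs, abs_of_nonneg (hβpos k)]
  have hrec : ∀ k, K ≤ k + 1 →
      ‖d (k+1)‖ / ‖vv (x (k+1))‖^2 ≤ 1/ε + θ * (‖d k‖ / ‖vv (x k)‖^2) := by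
    intro k hk
    have hεv := hK (k+1) hk
    have hβd : β (k+1) * ‖d k‖ ≤ θ * (‖vv (x (k+1))‖^2 / ‖vv (x k)‖^2) * ‖d k‖ :=
      mul_le_mul_of_nonneg_right (hβub k) (norm_nonneg _)
    have he : θ * (‖vv (x (k+1))‖^2 / ‖vv (x k)‖^2) * ‖d k‖ =
        θ * ‖vv (x (k+1))‖^2 * (‖d k‖ / ‖vv (x k)‖^2) := by ring
    have hv' : ‖vv (x (k+1))‖ ≤ ‖vv (x (k+1))‖^2 / ε := by
      rw [le_div_iff₀ hε0]
      nlinarith [hεv, norm_nonneg (vv (x (k+1)))]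
    have hsum : ‖d (k+1)‖ ≤ (1/ε + θ * (‖d k‖ / ‖vv (x k)‖^2)) * ‖vv (x (k+1))‖^2 := by
      have hdn := hdnorm k
      have hexp : (1/ε + θ * (‖d k‖ / ‖vv (x k)‖^2)) * ‖vv (x (k+1))‖^2 =
          ‖vv (x (k+1))‖^2 / ε + θ * ‖vv (x (k+1))‖^2 * (‖d k‖ / ‖vv (x k)‖^2) := by ring
      rw [hexp]
      rw [he] at hβd
      linarith
    rw [div_le_iff₀ (hν (k+1))]
    linarith [hsum]
  set M : ℝ := max (‖d K‖ / ‖vv (x K)‖^2) (1/(ε*(1-θ))) with hMdef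
  have hθ1' : 0 < 1 - θ := by linarith
  have hM0 : 0 < M := lt_of_lt_of_le (by positivity) (le_max_right _ _)
  have hMge : 1/(ε*(1-θ)) ≤ M := le_max_right _ _
  have hM : ∀ k, K ≤ k → ‖d k‖ / ‖vv (x k)‖^2 ≤ M := by
    intro k hk
    induction k, hk using Nat.le_induction with
    | base => exact le_max_left _ _
    | succ k hk ih =>
      have h1 := hrec k (by omega)
      have h2 : (1 - θ) * (1/(ε*(1-θ))) ≤ (1 - θ) * M :=
        mul_le_mul_of_nonneg_left hMge hθ1'.le
      have h3 : (1 - θ) * (1/(ε*(1-θ))) = 1/ε := by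
        rw [one_div, one_div, mul_inv, mul_comm ε⁻¹, ← mul_assoc, mul_inv_cancel₀ hθ1'.ne',
          one_mul]
      have h4 : θ * (‖d k‖ / ‖vv (x k)‖^2) ≤ θ * M := mul_le_mul_of_nonneg_left ih hθ0
      linarith
  clear_value M
  -- final telescoping contradiction
  set i0 : Fin m := ⟨0, hm⟩ with hi0
  set δ0 : ℝ := (1 - σ) * c^2 / (2 * L * M^2) with hδ0def
  have hδ0 : 0 < δ0 := by rw [hδ0def]; positivity
  clear_value δ0
  have hdecr : ∀ k, K ≤ k → Gl i0 (x (k+1)) ≤ Gl i0 (x k) - ρ * δ0 := by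
    intro k hk
    have h := (hW1 k i0).1
    have hkey : δ0 ≤ t k * (-(psi m n Gl Gu (x k) (d k))) := by
      rw [hδ0def]
      have hdM : ‖d k‖ ≤ M * ‖vv (x k)‖^2 := by
        have := hM k hk
        rw [div_le_iff₀ (hν k)] at this
        linarith
      exact tstep_bound h1σ hc0 (hν k) hLpos (ht k) hM0 (by linarith [hdes k])
        hdM (norm_nonneg _) (hstep k)
    have hmul := mul_le_mul_of_nonneg_left hkey hρ.le
    have hrw : ρ * (t k * (-(psi m n Gl Gu (x k) (d k)))) =
        -(ρ * t k * psi m n Gl Gu (x k) (d k)) := by ring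
    rw [hrw] at hmul
    linarith
  have htel : ∀ N : ℕ, Gl i0 (x (K+N)) ≤ Gl i0 (x K) - N * (ρ * δ0) := by
    intro N
    induction N with
    | zero => simp
    | succ N ih =>
      have h := hdecr (K+N) (by omega)
      have : ((N : ℝ) + 1) * (ρ * δ0) = N * (ρ * δ0) + ρ * δ0 := by ring
      push_cast
      rw [show K + (N + 1) = (K + N) + 1 by omega] at *
      linarith
  obtain ⟨⟨Cl, hCl⟩, -⟩ := hA2 x hL0 (fun i k => hdecl k i) i0
  obtain ⟨N, hN⟩ := exists_nat_gt ((Gl i0 (x K) - Cl) / (ρ * δ0))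
  have hρδ : 0 < ρ * δ0 := by positivity
  have hN2 : Gl i0 (x K) - Cl < N * (ρ * δ0) := by
    rw [div_lt_iff₀ hρδ] at hN
    linarith
  have h1 := htel N
  have h2 := hCl (K+N)
  linarith
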